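/- For every d ≥ 2 and every integer k ≥ 1, the simplex S_d(k) ⊂ ℝ^d is a clean lattice d-simplex (the only lattice points on its boundary are its d+1 vertices), and its topological interior contains exactly k lattice points, namely the points −i·(e_1 + ⋯ + e_d) for i = 0, 1, …, k−1. -/

import Mathlib

open MeasureTheory Set
open scoped ENNReal

noncomputable section

/-- A point of `ℝ^d` is a lattice point if all its coordinates are integers. -/
def IsLatticePt (d : ℕ) (x : Fin d → ℝ) : Prop := ∀ i, ∃ z : ℤ, x i = (z : ℝ)

/-- A lattice `d`-simplex: the convex hull of `d+1` affinely independent points of `ℤ^d`. -/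
def IsLatticeSimplex (d : ℕ) (T : Set (Fin d → ℝ)) : Prop :=
  ∃ v : Fin (d + 1) → Fin d → ℤ,
    AffineIndependent ℝ (fun i => fun j => ((v i j : ℤ) : ℝ)) ∧
    T = convexHull ℝ (Set.range (fun i => fun j => ((v i j : ℤ) : ℝ)))

/-- A lattice `d`-polytope: convex hull of a finite set of lattice points affinely
spanning `ℝ^d`. -/
def IsLatticePolytope (d : ℕ) (P : Set (Fin d → ℝ)) : Prop :=
  ∃ F : Finset (Fin d → ℤ),
    affineSpan ℝ ((fun v : Fin d → ℤ => fun j : Fin d => (v j : ℝ)) '' ↑F) = ⊤ ∧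
    P = convexHull ℝ ((fun v : Fin d → ℤ => fun j : Fin d => (v j : ℝ)) '' ↑F)

/-- Clean: the only lattice points on the boundary are the vertices (extreme points). -/
def IsClean (d : ℕ) (P : Set (Fin d → ℝ)) : Prop :=
  frontier P ∩ {x | IsLatticePt d x} = Set.extremePoints ℝ P

/-- Unimodular equivalence of subsets of `ℝ^d`. -/
def UnimodEquiv (d : ℕ) (P Q : Set (Fin d → ℝ)) : Prop :=
  ∃ (M : Matrix (Fin d) (Fin d) ℤ) (u : Fin d → ℤ),
    (M.det = 1 ∨ M.det = -1) ∧
    (fun x => (M.map (fun z : ℤ => (z : ℝ))).mulVec x + (fun i => (u i : ℝ))) '' P = Q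

/-- `S_d(k) = conv(e_1, …, e_d, -k(e_1 + ⋯ + e_d))`. -/
def Sdk (d k : ℕ) : Set (Fin d → ℝ) :=
  convexHull ℝ
    ((Set.range fun i : Fin d => (Pi.single i 1 : Fin d → ℝ)) ∪ {fun _ => -(k : ℝ)})

/-- `T_{a_1,…,a_d}`: vertex set `{0, e_1, …, e_{d-1}, (a_1,…,a_d)}`. -/
def Ta (d : ℕ) (a : Fin d → ℤ) : Set (Fin d → ℝ) :=
  convexHull ℝ
    ({(0 : Fin d → ℝ)} ∪
      {x | ∃ i : Fin d, i.val < d - 1 ∧ x = (Pi.single i 1 : Fin d → ℝ)} ∪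
      {fun i => (a i : ℝ)})

namespace SdkAux

/-- The linear functional whose nonnegativity cuts out facet `i`. -/
def Fl (d k : ℕ) (i : Fin d) (x : Fin d → ℝ) : ℝ :=
  ((d : ℝ) * k + 1) * x i - k * (∑ j, x j) + k

/-- Inequality description of `S_d(k)`. -/
def Sset (d k : ℕ) : Set (Fin d → ℝ) :=
  {x | (∀ i, 0 ≤ Fl d k i x) ∧ ∑ j, x j ≤ 1}

/-- Strict-inequality (interior) description. -/
def Sint (d k : ℕ) : Set (Fin d → ℝ) :=
  {x | (∀ i, 0 < Fl d k i x) ∧ ∑ j, x j < 1}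

lemma sum_single (d : ℕ) (i : Fin d) : ∑ j, (Pi.single i (1:ℝ)) j = 1 := by
  simp

lemma Fl_single (d k : ℕ) (i j : Fin d) :
    Fl d k j (Pi.single i 1) = if j = i then (d:ℝ)*k + 1 else 0 := by
  rw [Fl, sum_single]
  rcases eq_or_ne j i with h | h
  · simp [h, Pi.single_apply]
  · simp [h, Pi.single_apply]

lemma sum_const_vec (d : ℕ) (c : ℝ) : ∑ _j : Fin d, c = (d:ℝ) * c := by
  simp [Finset.sum_const, mul_comm]

lemma Fl_const (d k : ℕ) (j : Fin d) (c : ℝ) :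
    Fl d k j (fun _ => c) = c + (k:ℝ) := by
  rw [Fl, sum_const_vec]; ring

lemma single_mem (d k : ℕ) (i : Fin d) : (Pi.single i 1 : Fin d → ℝ) ∈ Sset d k := by
  constructor
  · intro j
    rw [Fl_single]
    split <;> positivity
  · rw [sum_single]

lemma const_neg_mem (d k : ℕ) (n : ℕ) (hn : n ≤ k) :
    (fun _ => -(n:ℝ) : Fin d → ℝ) ∈ Sset d k := by
  constructor
  · intro j
    rw [Fl_const]
    have : (n:ℝ) ≤ k := by exact_mod_cast hn
    linarith
  · rw [sum_const_vec]
    nlinarith [Nat.cast_nonneg (α := ℝ) d, Nat.cast_nonneg (α := ℝ) n]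

lemma sum_combo (d : ℕ) (a b : ℝ) (x y : Fin d → ℝ) :
    ∑ j, (a • x + b • y) j = a * (∑ j, x j) + b * (∑ j, y j) := by
  simp [Finset.sum_add_distrib, Finset.mul_sum]

lemma Fl_combo (d k : ℕ) (i : Fin d) (a b : ℝ) (hab : a + b = 1) (x y : Fin d → ℝ) :
    Fl d k i (a • x + b • y) = a * Fl d k i x + b * Fl d k i y := by
  have hs := sum_combo d a b x y
  simp only [Fl]
  rw [hs]
  simp only [Pi.add_apply, Pi.smul_apply, smul_eq_mul]
  linear_combination (-(k:ℝ)) * hab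

lemma convex_Sset (d k : ℕ) : Convex ℝ (Sset d k) := by
  intro x hx y hy a b ha hb hab
  constructor
  · intro i
    rw [Fl_combo d k i a b hab]
    have := hx.1 i; have := hy.1 i
    nlinarith
  · rw [sum_combo]
    nlinarith [hx.2, hy.2]

/-- The vertex set of `S_d(k)`. -/
def Vtx (d k : ℕ) : Set (Fin d → ℝ) :=
  (Set.range fun i : Fin d => (Pi.single i 1 : Fin d → ℝ)) ∪ {fun _ => -(k : ℝ)}

lemma Ddk_pos (d k : ℕ) : (0:ℝ) < (d:ℝ) * k + 1 := by positivity

lemma Sset_subset_hull (d k : ℕ) (x : Fin d → ℝ) (hx : x ∈ Sset d k) :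
    x ∈ convexHull ℝ (Vtx d k) := by
  set D : ℝ := (d:ℝ) * k + 1 with hD
  have hDpos := Ddk_pos d k
  set z : Fin (d+1) → Fin d → ℝ :=
    Fin.snoc (fun i => Pi.single i 1) (fun _ => -(k:ℝ)) with hz
  set w : Fin (d+1) → ℝ :=
    Fin.snoc (fun i => Fl d k i x / D) ((1 - ∑ j, x j) / D) with hw
  have hw0 : ∀ i ∈ Finset.univ, 0 ≤ w i := by
    intro i _
    refine Fin.lastCases ?_ ?_ i
    · simp only [hw, Fin.snoc_last]
      exact div_nonneg (by linarith [hx.2]) hDpos.le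
    · intro i
      simp only [hw, Fin.snoc_castSucc]
      exact div_nonneg (hx.1 i) hDpos.le
  have hwsum : ∑ i, w i = 1 := by
    rw [Fin.sum_univ_castSucc]
    simp only [hw, Fin.snoc_castSucc, Fin.snoc_last]
    rw [← Finset.sum_div]
    have hFsum : ∑ i, Fl d k i x = (∑ j, x j) + (d:ℝ) * k := by
      simp only [Fl]
      rw [Finset.sum_add_distrib, Finset.sum_sub_distrib, ← Finset.mul_sum,
        ← Finset.sum_mul, sum_const_vec]
      ring
    rw [hFsum]
    rw [hD]
    field_simp
    ring
  have hcm : Finset.univ.centerMass w z ∈ convexHull ℝ (Vtx d k) := by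
    refine Finset.centerMass_mem_convexHull _ hw0 (by rw [hwsum]; norm_num) ?_
    intro i _
    refine Fin.lastCases ?_ ?_ i
    · simp only [hz, Fin.snoc_last]
      exact Or.inr rfl
    · intro i
      simp only [hz, Fin.snoc_castSucc]
      exact Or.inl ⟨i, rfl⟩
  have hxeq : Finset.univ.centerMass w z = x := by
    rw [Finset.centerMass_eq_of_sum_1 _ _ hwsum]
    funext j
    rw [Finset.sum_apply]
    rw [Fin.sum_univ_castSucc]
    simp only [hw, hz, Fin.snoc_castSucc, Fin.snoc_last, Pi.smul_apply, smul_eq_mul]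
    have hone : ∑ i : Fin d, Fl d k i x / D * (Pi.single i 1 : Fin d → ℝ) j
        = Fl d k j x / D := by
      rw [Finset.sum_eq_single j]
      · simp
      · intro b _ hbj
        simp [Pi.single_apply, Ne.symm hbj]
      · simp
    rw [hone, Fl]
    rw [hD]
    field_simp
    ring
  rwa [hxeq] at hcm

lemma hull_eq (d k : ℕ) : convexHull ℝ (Vtx d k) = Sset d k := by
  apply le_antisymm
  · apply convexHull_min ?_ (convex_Sset d k)
    rintro x (⟨i, rfl⟩ | rfl)
    · exact single_mem d k i
    · have := const_neg_mem d k k le_rfl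
      exact this
  · intro x hx
    exact Sset_subset_hull d k x hx

lemma isOpen_Sint (d k : ℕ) : IsOpen (Sint d k) := by
  have h1 : Sint d k = (⋂ i, {x : Fin d → ℝ | 0 < Fl d k i x}) ∩
      {x : Fin d → ℝ | ∑ j, x j < 1} := by
    ext x; simp [Sint, Set.mem_iInter]
  rw [h1]
  have hsum : Continuous fun x : Fin d → ℝ => ∑ j, x j :=
    continuous_finset_sum _ fun j _ => continuous_apply j
  refine IsOpen.inter (isOpen_iInter_of_finite fun i => ?_) (isOpen_lt hsum continuous_const)
  have : Continuous fun x : Fin d → ℝ => Fl d k i x := by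
    unfold Fl
    exact (((continuous_const.mul (continuous_apply i)).sub
      (continuous_const.mul hsum)).add continuous_const)
  exact isOpen_lt continuous_const this

lemma Sint_subset (d k : ℕ) : Sint d k ⊆ Sset d k :=
  fun x hx => ⟨fun i => (hx.1 i).le, hx.2.le⟩

lemma interior_eq (d k : ℕ) (hd : 2 ≤ d) : interior (Sset d k) = Sint d k := by
  apply le_antisymm
  · intro x hx
    have hxS : x ∈ Sset d k := interior_subset hx
    have hball : ∃ ε > 0, Metric.ball x ε ⊆ Sset d k := by
      rw [mem_interior_iff_mem_nhds, Metric.mem_nhds_iff] at hx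
      exact hx
    obtain ⟨ε, hε, hsub⟩ := hball
    have hmem : ∀ v : Fin d → ℝ, (∀ j, |v j| ≤ ε / 2) → x + v ∈ Sset d k := by
      intro v hv
      apply hsub
      rw [Metric.mem_ball]
      have : dist (x + v) x ≤ ε / 2 := by
        rw [dist_pi_le_iff (by positivity)]
        intro j
        simp only [Pi.add_apply, Real.dist_eq, add_sub_cancel_left]
        exact hv j
      linarith
    have hd0 : 0 < d := by omega
    constructor
    · intro i
      by_contra hFi
      push_neg at hFi
      have hv := hmem (-(ε/2) • (Pi.single i 1 : Fin d → ℝ)) ?_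
      · have hF := hv.1 i
        have hsum : ∑ j, (x + -(ε/2) • (Pi.single i 1 : Fin d → ℝ)) j = (∑ j, x j) - ε/2 := by
          simp only [Pi.add_apply]
          rw [Finset.sum_add_distrib]
          have : ∑ j, (-(ε/2) • (Pi.single i 1 : Fin d → ℝ)) j = -(ε/2) := by
            simp only [Pi.smul_apply, smul_eq_mul, ← Finset.mul_sum, sum_single d i, mul_one]
          rw [this]; ring
        rw [Fl] at hF
        rw [hsum] at hF
        simp only [Pi.add_apply, Pi.smul_apply, Pi.single_eq_same, smul_eq_mul,
          mul_one] at hF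
        have hFx : Fl d k i x ≤ 0 := hFi
        rw [Fl] at hFx
        have hdk : (1:ℝ) ≤ (d:ℝ) := by exact_mod_cast hd0
        have hpos : (0:ℝ) < (d:ℝ)*k + 1 - k := by
          nlinarith [Nat.cast_nonneg (α := ℝ) k]
        nlinarith [mul_pos (half_pos hε) hpos]
      · intro j
        simp only [Pi.smul_apply, smul_eq_mul]
        rcases eq_or_ne j i with rfl | h
        · simp only [Pi.single_eq_same, mul_one, abs_neg]
          rw [abs_of_nonneg (by positivity)]
        · simp only [Pi.single_eq_of_ne h, mul_zero, abs_zero]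
          positivity
    · by_contra hS
      push_neg at hS
      have hS1 : ∑ j, x j = 1 := le_antisymm hxS.2 hS
      set i0 : Fin d := ⟨0, hd0⟩
      have hv := hmem ((ε/2) • (Pi.single i0 1 : Fin d → ℝ)) ?_
      · have := hv.2
        have hsum : ∑ j, (x + (ε/2) • (Pi.single i0 1 : Fin d → ℝ)) j = (∑ j, x j) + ε/2 := by
          simp only [Pi.add_apply]
          rw [Finset.sum_add_distrib]
          have : ∑ j, ((ε/2) • (Pi.single i0 1 : Fin d → ℝ)) j = ε/2 := by
            simp only [Pi.smul_apply, smul_eq_mul, ← Finset.mul_sum, sum_single d i0, mul_one]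
          rw [this]
        rw [hsum, hS1] at this
        linarith
      · intro j
        simp only [Pi.smul_apply, smul_eq_mul]
        rcases eq_or_ne j i0 with rfl | h
        · simp only [Pi.single_eq_same, mul_one]
          rw [abs_of_nonneg (by positivity)]
        · simp only [Pi.single_eq_of_ne h, mul_zero, abs_zero]
          positivity
  · exact interior_maximal (Sint_subset d k) (isOpen_Sint d k)

lemma int_classify (d k : ℕ) (hd : 2 ≤ d) (z : Fin d → ℤ)
    (hF : ∀ i, 0 ≤ ((d:ℤ) * k + 1) * z i - k * (∑ j, z j) + k)
    (hS : ∑ j, z j ≤ 1) :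
    (∃ i, z = Pi.single i 1) ∨ ∃ n : ℕ, n ≤ k ∧ z = fun _ => -(n:ℤ) := by
  have hd0 : 0 < d := by omega
  have hne : (Finset.univ : Finset (Fin d)).Nonempty := ⟨⟨0, hd0⟩, Finset.mem_univ _⟩
  obtain ⟨i0, -, hmin⟩ := Finset.exists_min_image Finset.univ z hne
  obtain ⟨i1, -, hmax⟩ := Finset.exists_max_image Finset.univ z hne
  set S : ℤ := ∑ j, z j with hSdef
  by_cases hcon : ∀ j, z j = z i0
  · -- constant case
    set c : ℤ := z i0 with hc
    have hSc : S = (d:ℤ) * c := by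
      rw [hSdef, Finset.sum_congr rfl fun j _ => hcon j]
      simp [mul_comm]
    have h1 : 0 ≤ c + (k:ℤ) := by
      have := hF i0
      rw [← hc, hSc] at this
      nlinarith
    have h2 : c ≤ 0 := by
      by_contra hcpos
      push_neg at hcpos
      have : (2:ℤ) ≤ d := by exact_mod_cast hd
      nlinarith [hS, hSc]
    refine Or.inr ⟨(-c).toNat, ?_, ?_⟩
    · omega
    · funext j
      rw [hcon j]
      omega
  · -- nonconstant case
    push_neg at hcon
    obtain ⟨j0, hj0⟩ := hcon
    have hmM : z i0 < z i1 := by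
      rcases lt_or_eq_of_le (hmin j0 (Finset.mem_univ _)) with h | h
      · exact lt_of_lt_of_le h (hmax j0 (Finset.mem_univ _))
      · exact absurd h.symm hj0
    have hne01 : i1 ≠ i0 := fun h => by rw [h] at hmM; exact lt_irrefl _ hmM
    -- S ≥ d * m + 1  where m = z i0
    have hSsplit : S = z i0 + z i1 + ∑ j ∈ (Finset.univ.erase i0).erase i1, z j := by
      rw [hSdef, ← Finset.add_sum_erase _ z (Finset.mem_univ i0),
        ← Finset.add_sum_erase _ z (Finset.mem_erase.2 ⟨hne01, Finset.mem_univ i1⟩)]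
      ring
    have hcard : ((Finset.univ.erase i0).erase i1).card = d - 2 := by
      rw [Finset.card_erase_of_mem (Finset.mem_erase.2 ⟨hne01, Finset.mem_univ i1⟩),
        Finset.card_erase_of_mem (Finset.mem_univ i0), Finset.card_univ, Fintype.card_fin]
      omega
    have htail : ((d:ℤ) - 2) * z i0 ≤ ∑ j ∈ (Finset.univ.erase i0).erase i1, z j := by
      have := Finset.card_nsmul_le_sum ((Finset.univ.erase i0).erase i1) z (z i0)
        (fun j _ => hmin j (Finset.mem_univ j))
      rw [hcard] at this
      have hcast : ((d - 2 : ℕ) : ℤ) = (d:ℤ) - 2 := by omega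
      rw [nsmul_eq_mul, hcast] at this
      exact this
    have hSlb : (d:ℤ) * z i0 + 1 ≤ S := by
      have : z i0 + 1 ≤ z i1 := hmM
      have h2 : (2:ℤ) ≤ (d:ℤ) := by exact_mod_cast hd
      nlinarith [hSsplit, htail]
    -- deduce z i0 ≥ 0
    have hm0 : 0 ≤ z i0 := by
      have hFi0 := hF i0
      have hkS : (k:ℤ) * ((d:ℤ) * z i0 + 1) ≤ k * S :=
        mul_le_mul_of_nonneg_left hSlb (Int.ofNat_nonneg k)
      nlinarith
    -- so all coords ≥ 0, z i1 = 1, rest = 0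
    have hz0 : ∀ j, 0 ≤ z j := fun j => le_trans hm0 (hmin j (Finset.mem_univ j))
    have hi1_ge : 1 ≤ z i1 := by omega
    have hrest : ∑ j ∈ Finset.univ.erase i1, z j = S - z i1 := by
      rw [hSdef, ← Finset.add_sum_erase _ z (Finset.mem_univ i1)]
      ring
    have hrest0 : ∑ j ∈ Finset.univ.erase i1, z j = 0 := by
      have h1 : 0 ≤ ∑ j ∈ Finset.univ.erase i1, z j :=
        Finset.sum_nonneg fun j _ => hz0 j
      omega
    have hzero : ∀ j ∈ Finset.univ.erase i1, z j = 0 :=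
      (Finset.sum_eq_zero_iff_of_nonneg fun j _ => hz0 j).1 hrest0
    have hi1 : z i1 = 1 := by
      have := hrest0
      omega
    refine Or.inl ⟨i1, funext fun j => ?_⟩
    rcases eq_or_ne j i1 with rfl | h
    · simp [hi1]
    · rw [Pi.single_apply, if_neg h]
      exact hzero j (Finset.mem_erase.2 ⟨h, Finset.mem_univ j⟩)

/-- Real version of the classification of lattice points of `Sset`. -/
lemma lattice_classify (d k : ℕ) (hd : 2 ≤ d) (x : Fin d → ℝ)
    (hx : x ∈ Sset d k) (hlat : ∀ i, ∃ z : ℤ, x i = (z : ℝ)) :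
    (∃ i, x = Pi.single i 1) ∨ ∃ n : ℕ, n ≤ k ∧ x = fun _ => -(n:ℝ) := by
  choose z hz using hlat
  have hxz : x = fun i => ((z i : ℤ) : ℝ) := funext hz
  have hsum : (((∑ j, z j : ℤ)) : ℝ) = ∑ j, x j := by
    rw [hxz]; push_cast; rfl
  have hF : ∀ i, 0 ≤ ((d:ℤ) * k + 1) * z i - k * (∑ j, z j) + k := by
    intro i
    have := hx.1 i
    rw [Fl, hxz] at this
    have h2 : (0:ℝ) ≤ ((((d:ℤ) * k + 1) * z i - k * (∑ j, z j) + k : ℤ) : ℝ) := by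
      push_cast
      push_cast at this
      convert this using 2
    exact_mod_cast h2
  have hS : (∑ j, z j : ℤ) ≤ 1 := by
    have := hx.2
    rw [← hsum] at this
    exact_mod_cast this
  rcases int_classify d k hd z hF hS with ⟨i, hi⟩ | ⟨n, hn, hzn⟩
  · left
    refine ⟨i, ?_⟩
    rw [hxz, hi]
    funext j
    simp [Pi.single_apply]
  · right
    refine ⟨n, hn, ?_⟩
    rw [hxz, hzn]
    push_cast
    rfl

lemma combo_zero {a b p q : ℝ} (ha : 0 < a) (hb : 0 < b) (hp : 0 ≤ p) (hq : 0 ≤ q)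
    (h : a * p + b * q = 0) : p = 0 ∧ q = 0 := by
  constructor <;> nlinarith [mul_nonneg ha.le hp, mul_nonneg hb.le hq]

lemma tight_single (d k : ℕ) (i : Fin d) (x : Fin d → ℝ)
    (hsum : ∑ j, x j = 1) (hF : ∀ j, j ≠ i → Fl d k j x = 0) :
    x = Pi.single i 1 := by
  have hD := Ddk_pos d k
  have hzero : ∀ j, j ≠ i → x j = 0 := by
    intro j hj
    have := hF j hj
    rw [Fl, hsum] at this
    have h2 : ((d:ℝ) * k + 1) * x j = 0 := by linarith
    exact (mul_eq_zero.1 h2).resolve_left (by linarith)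
  have hxi : x i = 1 := by
    have h1 : ∑ j, x j = x i + ∑ j ∈ Finset.univ.erase i, x j :=
      (Finset.add_sum_erase _ x (Finset.mem_univ i)).symm
    have h2 : ∑ j ∈ Finset.univ.erase i, x j = 0 :=
      Finset.sum_eq_zero fun j hj => hzero j (Finset.mem_erase.1 hj).1
    rw [hsum, h2] at h1
    linarith
  funext j
  rcases eq_or_ne j i with rfl | h
  · simp [hxi]
  · rw [Pi.single_apply, if_neg h]
    exact hzero j h

lemma tight_const (d k : ℕ) (hd : 2 ≤ d) (x : Fin d → ℝ)
    (hF : ∀ j, Fl d k j x = 0) : x = fun _ => -(k:ℝ) := by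
  have hD := Ddk_pos d k
  have hd0 : 0 < d := by omega
  set i0 : Fin d := ⟨0, hd0⟩
  have hconst : ∀ j, x j = x i0 := by
    intro j
    have h1 := hF j
    have h2 := hF i0
    rw [Fl] at h1 h2
    have : ((d:ℝ) * k + 1) * x j = ((d:ℝ) * k + 1) * x i0 := by linarith
    exact mul_left_cancel₀ (by linarith) this
  have hsum : ∑ j, x j = (d:ℝ) * x i0 := by
    rw [Finset.sum_congr rfl fun j _ => hconst j, sum_const_vec]
  have := hF i0
  rw [Fl, hsum] at this
  have hxi0 : x i0 = -(k:ℝ) := by nlinarith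
  funext j
  rw [hconst j, hxi0]

lemma vtx_extreme (d k : ℕ) (hd : 2 ≤ d) :
    Vtx d k ⊆ Set.extremePoints ℝ (Sset d k) := by
  rintro x (⟨i, rfl⟩ | rfl)
  · refine ⟨single_mem d k i, ?_⟩
    rintro x₁ hx₁ x₂ hx₂ ⟨a, b, ha, hb, hab, heq⟩
    have hFz : ∀ j, j ≠ i → Fl d k j x₁ = 0 ∧ Fl d k j x₂ = 0 := by
      intro j hj
      have h0 : Fl d k j (a • x₁ + b • x₂) = 0 := by
        rw [heq, Fl_single, if_neg hj]
      rw [Fl_combo d k j a b hab] at h0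
      exact combo_zero ha hb (hx₁.1 j) (hx₂.1 j) h0
    have hSz : ∑ j, x₁ j = 1 ∧ ∑ j, x₂ j = 1 := by
      have h0 : ∑ j, (a • x₁ + b • x₂) j = 1 := by rw [heq, sum_single]
      rw [sum_combo] at h0
      have := combo_zero ha hb (by linarith [hx₁.2] : (0:ℝ) ≤ 1 - ∑ j, x₁ j)
        (by linarith [hx₂.2] : (0:ℝ) ≤ 1 - ∑ j, x₂ j) (by linarith)
      constructor <;> linarith [this.1, this.2]
    exact tight_single d k i x₁ hSz.1 fun j hj => (hFz j hj).1
  · refine ⟨const_neg_mem d k k le_rfl, ?_⟩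
    rintro x₁ hx₁ x₂ hx₂ ⟨a, b, ha, hb, hab, heq⟩
    have hFz : ∀ j, Fl d k j x₁ = 0 ∧ Fl d k j x₂ = 0 := by
      intro j
      have h0 : Fl d k j (a • x₁ + b • x₂) = 0 := by
        rw [heq, Fl_const]; ring
      rw [Fl_combo d k j a b hab] at h0
      exact combo_zero ha hb (hx₁.1 j) (hx₂.1 j) h0
    exact tight_const d k hd x₁ fun j => (hFz j).1

lemma extreme_eq (d k : ℕ) (hd : 2 ≤ d) :
    Set.extremePoints ℝ (Sset d k) = Vtx d k := by
  apply le_antisymm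
  · rw [← hull_eq d k]
    exact extremePoints_convexHull_subset
  · exact vtx_extreme d k hd

lemma affind (d k : ℕ) :
    AffineIndependent ℝ (Fin.snoc (fun i : Fin d => (Pi.single i 1 : Fin d → ℝ))
      (fun _ => -(k:ℝ)) : Fin (d+1) → Fin d → ℝ) := by
  set p : Fin (d+1) → Fin d → ℝ :=
    Fin.snoc (fun i : Fin d => (Pi.single i 1 : Fin d → ℝ)) (fun _ => -(k:ℝ)) with hp
  rw [affineIndependent_iff]
  intro s w hw hsum
  set W : Fin (d+1) → ℝ := fun i => if i ∈ s then w i else 0 with hW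
  have hWsum : ∑ i, W i = 0 := by
    rw [hW]
    rw [Finset.sum_ite_mem, Finset.univ_inter, hw]
  have hWvec : ∑ i, W i • p i = 0 := by
    have : ∀ i : Fin (d+1), W i • p i = if i ∈ s then w i • p i else 0 := by
      intro i
      by_cases h : i ∈ s <;> simp [hW, h]
    rw [Finset.sum_congr rfl fun i _ => this i, Finset.sum_ite_mem, Finset.univ_inter, hsum]
  set c : ℝ := W (Fin.last d) with hc
  have hcoord : ∀ j : Fin d, W j.castSucc = c * k := by
    intro j
    have h0 : (∑ i, W i • p i) j = 0 := by rw [hWvec]; rfl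
    rw [Finset.sum_apply] at h0
    rw [Fin.sum_univ_castSucc] at h0
    simp only [hp, Pi.smul_apply, Fin.snoc_castSucc, Fin.snoc_last, smul_eq_mul] at h0
    have h1 : ∑ i : Fin d, W i.castSucc * (Pi.single i 1 : Fin d → ℝ) j
        = W j.castSucc := by
      rw [Finset.sum_eq_single j]
      · simp
      · intro b _ hbj
        simp [Pi.single_apply, Ne.symm hbj]
      · simp
    rw [h1] at h0
    linarith
  have hcsum : c * ((d:ℝ) * k + 1) = 0 := by
    have h0 : ∑ i, W i = ∑ j : Fin d, W j.castSucc + c := Fin.sum_univ_castSucc W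
    rw [hWsum] at h0
    rw [Finset.sum_congr rfl fun j _ => hcoord j] at h0
    rw [sum_const_vec] at h0
    nlinarith
  have hc0 : c = 0 := by
    have := Ddk_pos d k
    rcases mul_eq_zero.1 hcsum with h | h
    · exact h
    · linarith
  have hWzero : ∀ i, W i = 0 := by
    intro i
    refine Fin.lastCases ?_ ?_ i
    · exact hc0
    · intro j
      rw [hcoord j, hc0, zero_mul]
  intro i hi
  simpa [hW, hi] using hWzero i

lemma single_lattice (d : ℕ) (i : Fin d) :
    ∀ j, ∃ z : ℤ, (Pi.single i 1 : Fin d → ℝ) j = (z : ℝ) := by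
  intro j
  refine ⟨if j = i then 1 else 0, ?_⟩
  rw [Pi.single_apply]
  split <;> simp

lemma const_lattice (d n : ℕ) :
    ∀ j : Fin d, ∃ z : ℤ, (fun _ => -(n:ℝ) : Fin d → ℝ) j = (z : ℝ) := by
  intro j
  exact ⟨-(n:ℤ), by push_cast; ring⟩

lemma const_mem_Sint (d k : ℕ) (n : ℕ) (hn : n < k) :
    (fun _ => -(n:ℝ) : Fin d → ℝ) ∈ Sint d k := by
  constructor
  · intro j
    rw [Fl_const]
    have : (n:ℝ) < k := by exact_mod_cast hn
    linarith
  · rw [sum_const_vec]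
    have : (0:ℝ) ≤ (d:ℝ) * n := by positivity
    nlinarith

end SdkAux

/-- For `d ≥ 2` and `k ≥ 1`, `S_d(k)` is a clean lattice `d`-simplex whose
vertices are `e_1, …, e_d, -k(e_1+⋯+e_d)` and whose interior contains exactly the `k`
lattice points `-i(e_1+⋯+e_d)`, `i = 0, …, k-1`. -/


theorem Sdk_clean_and_interior_points (d k : ℕ) (hd : 2 ≤ d) (hk : 1 ≤ k) :
    IsLatticeSimplex d (Sdk d k) ∧
    IsClean d (Sdk d k) ∧
    Set.extremePoints ℝ (Sdk d k) =
      (Set.range fun i : Fin d => (Pi.single i 1 : Fin d → ℝ)) ∪ {fun _ => -(k : ℝ)} ∧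
    {x ∈ interior (Sdk d k) | IsLatticePt d x} =
      {x | ∃ i : ℕ, i < k ∧ x = fun _ => -(i : ℝ)} := by
  have hSdk : Sdk d k = SdkAux.Sset d k := by
    rw [show Sdk d k = convexHull ℝ (SdkAux.Vtx d k) from rfl, SdkAux.hull_eq]
  have hclosed : IsClosed (Sdk d k) := by
    rw [show Sdk d k = convexHull ℝ (SdkAux.Vtx d k) from rfl]
    exact (((Set.finite_range _).union (Set.finite_singleton _)).isCompact_convexHull ℝ).isClosed
  have hint : interior (Sdk d k) = SdkAux.Sint d k := by
    rw [hSdk, SdkAux.interior_eq d k hd]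
  have hfront : frontier (Sdk d k) = SdkAux.Sset d k \ SdkAux.Sint d k := by
    rw [hclosed.frontier_eq, hint, hSdk]
  have hext : Set.extremePoints ℝ (Sdk d k) = SdkAux.Vtx d k := by
    rw [hSdk, SdkAux.extreme_eq d k hd]
  have hpe : (fun i => fun j => (((Fin.snoc (fun i : Fin d => Pi.single i (1:ℤ))
        (fun _ => -(k:ℤ)) : Fin (d+1) → Fin d → ℤ) i j : ℤ) : ℝ))
      = (Fin.snoc (fun i : Fin d => (Pi.single i 1 : Fin d → ℝ))
        (fun _ => -(k:ℝ)) : Fin (d+1) → Fin d → ℝ) := by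
    funext i
    refine Fin.lastCases ?_ ?_ i
    · funext j; simp [Fin.snoc_last]
    · intro i; funext j
      simp [Fin.snoc_castSucc, Pi.single_apply, apply_ite (fun z : ℤ => (z:ℝ))]
  have hrange : Set.range (Fin.snoc (fun i : Fin d => (Pi.single i 1 : Fin d → ℝ))
      (fun _ => -(k:ℝ)) : Fin (d+1) → Fin d → ℝ) = SdkAux.Vtx d k := by
    ext y
    constructor
    · rintro ⟨i, rfl⟩
      refine Fin.lastCases ?_ ?_ i
      · rw [Fin.snoc_last]; exact Or.inr rfl
      · intro i; rw [Fin.snoc_castSucc]; exact Or.inl ⟨i, rfl⟩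
    · rintro (⟨i, rfl⟩ | h)
      · exact ⟨i.castSucc, Fin.snoc_castSucc ..⟩
      · rw [Set.mem_singleton_iff] at h
        exact ⟨Fin.last d, by rw [Fin.snoc_last, h]⟩
  refine ⟨?_, ?_, ?_, ?_⟩
  · refine ⟨Fin.snoc (fun i : Fin d => Pi.single i (1:ℤ)) (fun _ => -(k:ℤ)), ?_, ?_⟩
    · rw [hpe]
      exact SdkAux.affind d k
    · rw [hpe, hrange]
      rfl
  · show frontier (Sdk d k) ∩ {x | IsLatticePt d x} = Set.extremePoints ℝ (Sdk d k)
    rw [hfront, hext]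
    ext x
    constructor
    · rintro ⟨⟨hxS, hxnotint⟩, hlat⟩
      rcases SdkAux.lattice_classify d k hd x hxS hlat with ⟨i, rfl⟩ | ⟨n, hn, rfl⟩
      · exact Or.inl ⟨i, rfl⟩
      · have hnk : n = k := by
          by_contra hne
          exact hxnotint (SdkAux.const_mem_Sint d k n (lt_of_le_of_ne hn hne))
        subst hnk
        exact Or.inr rfl
    · rintro (⟨i, rfl⟩ | hx)
      · refine ⟨⟨SdkAux.single_mem d k i, fun hc => ?_⟩, SdkAux.single_lattice d i⟩
        have := hc.2
        rw [SdkAux.sum_single] at this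
        exact lt_irrefl _ this
      · rw [Set.mem_singleton_iff] at hx
        subst hx
        refine ⟨⟨SdkAux.const_neg_mem d k k le_rfl, fun hc => ?_⟩, SdkAux.const_lattice d k⟩
        have := hc.1 ⟨0, by omega⟩
        rw [SdkAux.Fl_const] at this
        linarith
  · exact hext
  · ext x
    simp only [Set.mem_setOf_eq, Set.mem_sep_iff]
    constructor
    · rintro ⟨hxint, hlat⟩
      rw [hint] at hxint
      rcases SdkAux.lattice_classify d k hd x (SdkAux.Sint_subset d k hxint) hlat
        with ⟨i, rfl⟩ | ⟨n, hn, rfl⟩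
      · exfalso
        have := hxint.2
        rw [SdkAux.sum_single] at this
        exact lt_irrefl _ this
      · refine ⟨n, ?_, rfl⟩
        have h1 := hxint.1 ⟨0, by omega⟩
        rw [SdkAux.Fl_const] at h1
        have h2 : (n:ℝ) < k := by linarith
        exact_mod_cast h2
    · rintro ⟨n, hn, rfl⟩
      refine ⟨?_, SdkAux.const_lattice d n⟩
      rw [hint]
      exact SdkAux.const_mem_Sint d k n hn
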